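/- arXiv:2510.24433 — 3 statements merged into one kernel-verified Lean document; each statement's English description precedes it below -/
import Mathlib

section
/- (Theorem 1, LSIF reproduces the nearest-neighbor density-ratio estimator.) Let c ∈ ℝ^d, let X_1, …, X_{N₀} ∈ ℝ^d have pairwise distinct distances to c, let 1 ≤ M ≤ N₀, let R_M be the M-th smallest of ‖X_i − c‖, and set Φ(x) = 𝟙(‖x − c‖ ≤ R_M). Let Z_1, …, Z_{N₁} ∈ ℝ^d and K = #{j ∈ {1,…,N₁} : ‖Z_j − c‖ ≤ R_M}. Define Ĥ = (1/N₀) Σ_{i=1}^{N₀} Φ(X_i)² and ĥ = (1/N₁) Σ_{j=1}^{N₁} Φ(Z_j), and the LSIF estimate with λ = 0 as r̂(c) = (Ĥ)⁻¹ ĥ · Φ(c). Then r̂(c) = (N₀/N₁) · K/M. -/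
/-- Theorem 1 (LSIF reproduces the nearest-neighbor density-ratio estimator).
With basis function `Φ(x) = 𝟙(‖x − c‖ ≤ R_M)`, where `R_M` is the `M`-th smallest of the
distances `‖X i − c‖` (pairwise distinct), `Ĥ = (1/N₀) Σ Φ(X i)²`, `ĥ = (1/N₁) Σ Φ(Z j)`,
and `K = #{j : ‖Z j − c‖ ≤ R_M}`, the LSIF estimate with `λ = 0`, `r̂(c) = Ĥ⁻¹ ĥ Φ(c)`,
equals `(N₀/N₁) · K/M`. -/
theorem lsif_reproduces_nn_density_ratio (d N₀ N₁ M : ℕ)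
    (c : EuclideanSpace ℝ (Fin d))
    (X : Fin N₀ → EuclideanSpace ℝ (Fin d))
    (Z : Fin N₁ → EuclideanSpace ℝ (Fin d))
    (hdist : Function.Injective fun i => ‖X i - c‖)
    (hM : 1 ≤ M) (hMN : M ≤ N₀)
    (RM : ℝ)
    (hRM : RM = ((Finset.univ.image fun i => ‖X i - c‖).sort (· ≤ ·)).getD (M - 1) 0)
    (Φ : EuclideanSpace ℝ (Fin d) → ℝ)
    (hΦ : Φ = fun x => if ‖x - c‖ ≤ RM then 1 else 0)
    (K : ℕ) (hK : K = (Finset.univ.filter fun j => ‖Z j - c‖ ≤ RM).card)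
    (H h : ℝ)
    (hH : H = (1 / (N₀ : ℝ)) * ∑ i, (Φ (X i)) ^ 2)
    (hh : h = (1 / (N₁ : ℝ)) * ∑ j, Φ (Z j))
    (r : ℝ) (hr : r = H⁻¹ * h * Φ c) :
    r = ((N₀ : ℝ) / (N₁ : ℝ)) * ((K : ℝ) / (M : ℝ)) := by
  have hN₀ : 1 ≤ N₀ := le_trans hM hMN
  set f : Fin N₀ → ℝ := fun i => ‖X i - c‖ with hf
  set s : Finset ℝ := Finset.univ.image f with hs
  have hcard : s.card = N₀ := by
    rw [hs, Finset.card_image_of_injective _ hdist, Finset.card_univ, Fintype.card_fin]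
  have hlen : (s.sort (· ≤ ·)).length = N₀ := by rw [Finset.length_sort, hcard]
  have hM1 : M - 1 < (s.sort (· ≤ ·)).length := by omega
  set e := s.orderEmbOfFin hcard with he
  have hRM' : RM = e ⟨M - 1, by omega⟩ := by
    rw [hRM, Finset.orderEmbOfFin_apply, List.getD_eq_getElem _ _ hM1]
    rfl
  -- the image of `e` is `s`
  have himg : Finset.univ.image (fun j => e j) = s := by
    apply Finset.coe_injective
    rw [Finset.coe_image, Finset.coe_univ, Set.image_univ]
    exact_mod_cast Finset.range_orderEmbOfFin s hcard
  -- number of X's within distance RM is M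
  have hcount : (Finset.univ.filter fun i => f i ≤ RM).card = M := by
    have h1 : (Finset.univ.filter fun i => f i ≤ RM).card
        = (s.filter fun x => x ≤ RM).card := by
      rw [hs, Finset.filter_image, Finset.card_image_of_injective _ hdist]
    have h2 : (s.filter fun x => x ≤ RM).card
        = (Finset.univ.filter fun j : Fin N₀ => e j ≤ RM).card := by
      rw [← himg, Finset.filter_image,
        Finset.card_image_of_injective _ e.injective]
    have h3 : (Finset.univ.filter fun j : Fin N₀ => e j ≤ RM)
        = Finset.univ.filter fun j : Fin N₀ => (j : ℕ) < M := by
      apply Finset.filter_congr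
      intro j _
      rw [hRM', e.le_iff_le]
      simp only [Fin.le_def]
      omega
    have h4 : (Finset.univ.filter fun j : Fin N₀ => (j : ℕ) < M)
        = Finset.univ.image (Fin.castLE hMN) := by
      ext j
      simp only [Finset.mem_filter, Finset.mem_univ, true_and, Finset.mem_image]
      constructor
      · intro hj
        exact ⟨⟨j.1, hj⟩, by ext; simp⟩
      · rintro ⟨k, -, rfl⟩
        simpa using k.2
    rw [h1, h2, h3, h4, Finset.card_image_of_injective _ (Fin.castLE_injective hMN),
      Finset.card_univ, Fintype.card_fin]
  -- RM is nonnegative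
  have hRM0 : 0 ≤ RM := by
    have hmem : e ⟨M - 1, by omega⟩ ∈ Finset.univ.image f :=
      Finset.orderEmbOfFin_mem s hcard _
    obtain ⟨i, -, hi⟩ := Finset.mem_image.1 hmem
    rw [hRM']
    exact hi ▸ norm_nonneg (X i - c)
  have hΦc : Φ c = 1 := by
    rw [hΦ]
    simp [hRM0]
  -- compute the sums
  have hHsum : ∑ i, (Φ (X i)) ^ 2 = (M : ℝ) := by
    rw [hΦ]
    simp only [apply_ite (· ^ 2), one_pow, ne_eq, OfNat.ofNat_ne_zero,
      not_false_eq_true, zero_pow]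
    rw [Finset.sum_boole, hcount]
  have hhsum : ∑ j, Φ (Z j) = (K : ℝ) := by
    rw [hΦ, hK]
    rw [Finset.sum_boole]
  rw [hr, hH, hh, hHsum, hhsum, hΦc]
  have hM0 : (M : ℝ) ≠ 0 := by positivity
  have hN₀0 : (N₀ : ℝ) ≠ 0 := by positivity
  rcases Nat.eq_zero_or_pos N₁ with h1 | h1
  · subst h1
    simp
  · have hN₁0 : (N₁ : ℝ) ≠ 0 := by positivity
    field_simp
    try ring
    try tauto
end

section
/- Let P be a probability measure, Z a random element, and m a map such that α ↦ E[m(W, α)] is well defined on L²(P)-functions of Z. Suppose α₀ ∈ L²(P) is a Riesz representer, i.e., E[m(W, α)] = E[α₀(Z) α(Z)] for every α ∈ L²(P). Then for every α ∈ L²(P): E[α(Z)² − 2 m(W, α)] = E[(α(Z) − α₀(Z))²] − E[α₀(Z)²]. Consequently α₀ is the unique (up to almost-sure equality) minimizer of α ↦ E[α(Z)² − 2 m(W, α)] over L²(P). -/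
open MeasureTheory

lemma aux_int_mul {Ω : Type*} [MeasurableSpace Ω] {μ : Measure Ω} {f g : Ω → ℝ}
    (hf : MemLp f 2 μ) (hg : MemLp g 2 μ) :
    Integrable (fun ω => f ω * g ω) μ := by
  have h := L2.integrable_inner (𝕜 := ℝ) (hf.toLp f) (hg.toLp g)
  refine h.congr ?_
  filter_upwards [hf.coeFn_toLp, hg.coeFn_toLp] with ω h1 h2
  simp [h1, h2, mul_comm]

/-- Riesz regression risk identity: if `α₀ ∈ L²` is a Riesz representer, i.e.
`E[m(W, α)] = E[α₀(Z) α(Z)]` for every `α ∈ L²`, then for every `α ∈ L²`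
`E[α(Z)² − 2 m(W, α)] = E[(α(Z) − α₀(Z))²] − E[α₀(Z)²]`; consequently `α₀` is the
unique (up to almost-sure equality) minimizer of `α ↦ E[α(Z)² − 2 m(W, α)]` over `L²`. -/
theorem riesz_regression_risk {Ω 𝒳 : Type*} [MeasurableSpace Ω] [MeasurableSpace 𝒳]
    (μ : Measure Ω) [IsProbabilityMeasure μ]
    (Z : Ω → 𝒳) (hZ : Measurable Z)
    (α₀ : 𝒳 → ℝ) (hα₀ : MemLp (fun ω => α₀ (Z ω)) 2 μ)
    (M : (𝒳 → ℝ) → ℝ)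
    (hriesz : ∀ α : 𝒳 → ℝ, MemLp (fun ω => α (Z ω)) 2 μ →
      M α = ∫ ω, α₀ (Z ω) * α (Z ω) ∂μ) :
    (∀ α : 𝒳 → ℝ, MemLp (fun ω => α (Z ω)) 2 μ →
        (∫ ω, (α (Z ω)) ^ 2 ∂μ) - 2 * M α
          = (∫ ω, (α (Z ω) - α₀ (Z ω)) ^ 2 ∂μ) - ∫ ω, (α₀ (Z ω)) ^ 2 ∂μ) ∧
      (∀ α : 𝒳 → ℝ, MemLp (fun ω => α (Z ω)) 2 μ →
        (∫ ω, (α₀ (Z ω)) ^ 2 ∂μ) - 2 * M α₀ ≤ (∫ ω, (α (Z ω)) ^ 2 ∂μ) - 2 * M α) ∧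
      (∀ α : 𝒳 → ℝ, MemLp (fun ω => α (Z ω)) 2 μ →
        (∫ ω, (α (Z ω)) ^ 2 ∂μ) - 2 * M α = (∫ ω, (α₀ (Z ω)) ^ 2 ∂μ) - 2 * M α₀ →
        (fun ω => α (Z ω)) =ᵐ[μ] fun ω => α₀ (Z ω)) := by
  have key : ∀ α : 𝒳 → ℝ, MemLp (fun ω => α (Z ω)) 2 μ →
      (∫ ω, (α (Z ω)) ^ 2 ∂μ) - 2 * M α
        = (∫ ω, (α (Z ω) - α₀ (Z ω)) ^ 2 ∂μ) - ∫ ω, (α₀ (Z ω)) ^ 2 ∂μ := by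
    intro α hα
    have hsq := hα.integrable_sq
    have hsq₀ := hα₀.integrable_sq
    have hmul := aux_int_mul hα₀ hα
    have hexp : ∫ ω, (α (Z ω) - α₀ (Z ω)) ^ 2 ∂μ
        = (∫ ω, (α (Z ω)) ^ 2 ∂μ) - 2 * (∫ ω, α₀ (Z ω) * α (Z ω) ∂μ)
          + ∫ ω, (α₀ (Z ω)) ^ 2 ∂μ := by
      have : ∀ ω, (α (Z ω) - α₀ (Z ω)) ^ 2
          = (α (Z ω)) ^ 2 - 2 * (α₀ (Z ω) * α (Z ω)) + (α₀ (Z ω)) ^ 2 := by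
        intro ω; ring
      rw [show (fun ω => (α (Z ω) - α₀ (Z ω)) ^ 2)
          = fun ω => (α (Z ω)) ^ 2 - 2 * (α₀ (Z ω) * α (Z ω)) + (α₀ (Z ω)) ^ 2
          from funext this]
      rw [integral_add (by exact (hsq.sub (hmul.const_mul 2))) hsq₀,
        integral_sub hsq (hmul.const_mul 2), integral_const_mul]
    rw [hriesz α hα, hexp]; ring
  refine ⟨key, ?_, ?_⟩
  · intro α hα
    rw [key α hα, key α₀ hα₀]
    have h0 : ∫ ω, (α₀ (Z ω) - α₀ (Z ω)) ^ 2 ∂μ = 0 := by simp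
    have hnn : 0 ≤ ∫ ω, (α (Z ω) - α₀ (Z ω)) ^ 2 ∂μ :=
      integral_nonneg fun ω => sq_nonneg _
    linarith
  · intro α hα heq
    rw [key α hα, key α₀ hα₀] at heq
    have h0 : ∫ ω, (α₀ (Z ω) - α₀ (Z ω)) ^ 2 ∂μ = 0 := by simp
    have hzero : ∫ ω, (α (Z ω) - α₀ (Z ω)) ^ 2 ∂μ = 0 := by linarith
    have hint : Integrable (fun ω => (α (Z ω) - α₀ (Z ω)) ^ 2) μ :=
      (hα.sub hα₀).integrable_sq
    have := (integral_eq_zero_iff_of_nonneg (fun ω => sq_nonneg _) hint).mp hzero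
    filter_upwards [this] with ω hω
    have : (α (Z ω) - α₀ (Z ω)) ^ 2 = 0 := hω
    have := pow_eq_zero_iff (n := 2) (by norm_num) |>.mp this
    linarith
end

section
/- Let D ∈ {0,1}, X be covariates, and w(1, ·), w(0, ·) be bounded measurable functions. Define α(d, x) = 𝟙(d = 1) w(1, x) − 𝟙(d = 0) w(0, x) and the ATE functional m(W, α) = α(1, X) − α(0, X). Then E[α(D, X)² − 2 m(W, α)] = E[ 𝟙(D = 1) w(1, X)² + 𝟙(D = 0) w(0, X)² − 2 ( w(1, X) + w(0, X) ) ]. In particular, the Riesz regression objective for the ATE decomposes as the sum of the two LSIF objectives E[𝟙(D=1) w(1,X)²] − 2E[w(1,X)] and E[𝟙(D=0) w(0,X)²] − 2E[w(0,X)]. -/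
open MeasureTheory

/-- The Riesz regression objective for the ATE decomposes into the two LSIF objectives:
for `α(d, x) = 𝟙(d = 1) w(1, x) − 𝟙(d = 0) w(0, x)` and the ATE functional
`m(W, α) = α(1, X) − α(0, X)`,
`E[α(D, X)² − 2 m(W, α)]
  = E[𝟙(D=1) w(1,X)² + 𝟙(D=0) w(0,X)² − 2(w(1,X) + w(0,X))]`,
which is the sum of `E[𝟙(D=1) w(1,X)²] − 2E[w(1,X)]` and
`E[𝟙(D=0) w(0,X)²] − 2E[w(0,X)]`. -/
theorem riesz_objective_eq_lsif_objectives {Ω 𝒳 : Type*} [MeasurableSpace Ω]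
    [MeasurableSpace 𝒳]
    (μ : Measure Ω) [IsProbabilityMeasure μ]
    (X : Ω → 𝒳) (hX : Measurable X)
    (D : Ω → ℕ) (hD : Measurable D) (hD01 : ∀ ω, D ω = 0 ∨ D ω = 1)
    (w1 w0 : 𝒳 → ℝ) (hw1 : Measurable w1) (hw0 : Measurable w0)
    (C : ℝ) (hw1C : ∀ x, |w1 x| ≤ C) (hw0C : ∀ x, |w0 x| ≤ C)
    (α : ℕ → 𝒳 → ℝ)
    (hα : α = fun d x => (if d = 1 then w1 x else 0) - (if d = 0 then w0 x else 0)) :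
    (∫ ω, ((α (D ω) (X ω)) ^ 2 - 2 * (α 1 (X ω) - α 0 (X ω))) ∂μ
        = ∫ ω, ((if D ω = 1 then (w1 (X ω)) ^ 2 else 0)
            + (if D ω = 0 then (w0 (X ω)) ^ 2 else 0)
            - 2 * (w1 (X ω) + w0 (X ω))) ∂μ) ∧
      (∫ ω, ((α (D ω) (X ω)) ^ 2 - 2 * (α 1 (X ω) - α 0 (X ω))) ∂μ
        = ((∫ ω, (if D ω = 1 then (w1 (X ω)) ^ 2 else 0) ∂μ) - 2 * ∫ ω, w1 (X ω) ∂μ)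
          + ((∫ ω, (if D ω = 0 then (w0 (X ω)) ^ 2 else 0) ∂μ)
            - 2 * ∫ ω, w0 (X ω) ∂μ)) := by
  have hpt : ∀ ω, ((α (D ω) (X ω)) ^ 2 - 2 * (α 1 (X ω) - α 0 (X ω)))
      = ((if D ω = 1 then (w1 (X ω)) ^ 2 else 0)
          + (if D ω = 0 then (w0 (X ω)) ^ 2 else 0)
          - 2 * (w1 (X ω) + w0 (X ω))) := by
    intro ω
    rcases hD01 ω with h | h <;> simp [hα, h]
  have h1 : (∫ ω, ((α (D ω) (X ω)) ^ 2 - 2 * (α 1 (X ω) - α 0 (X ω))) ∂μ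
      = ∫ ω, ((if D ω = 1 then (w1 (X ω)) ^ 2 else 0)
          + (if D ω = 0 then (w0 (X ω)) ^ 2 else 0)
          - 2 * (w1 (X ω) + w0 (X ω))) ∂μ) :=
    integral_congr_ae (Filter.Eventually.of_forall hpt)
  -- integrability facts
  have hint : ∀ (w : 𝒳 → ℝ), Measurable w → (∀ x, |w x| ≤ C) →
      Integrable (fun ω => w (X ω)) μ := fun w hw hwC =>
    Integrable.mono' (integrable_const C) (hw.comp hX).aestronglyMeasurable
      (Filter.Eventually.of_forall fun ω => by simpa using hwC (X ω))
  have hi1 := hint w1 hw1 hw1C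
  have hi0 := hint w0 hw0 hw0C
  have hindInt : ∀ (w : 𝒳 → ℝ) (k : ℕ), Measurable w → (∀ x, |w x| ≤ C) →
      Integrable (fun ω => if D ω = k then (w (X ω)) ^ 2 else 0) μ := by
    intro w k hw hwC
    refine Integrable.mono' (integrable_const (C ^ 2))
      ?_ (Filter.Eventually.of_forall fun ω => ?_)
    · exact ((hw.comp hX).pow_const 2).ite (hD (measurableSet_singleton k)) measurable_const
        |>.aestronglyMeasurable
    · by_cases h : D ω = k
      · simp only [h, if_pos]
        rw [Real.norm_eq_abs, abs_pow]
        exact pow_le_pow_left₀ (abs_nonneg _) (hwC (X ω)) 2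
      · simp only [h, if_neg, not_false_iff, norm_zero]
        positivity
  have hj1 := hindInt w1 1 hw1 hw1C
  have hj0 := hindInt w0 0 hw0 hw0C
  have hA : Integrable (fun ω => (if D ω = 1 then (w1 (X ω)) ^ 2 else 0)
      + (if D ω = 0 then (w0 (X ω)) ^ 2 else 0)) μ := hj1.add hj0
  have hB : Integrable (fun ω => 2 * (w1 (X ω) + w0 (X ω))) μ :=
    (hi1.add hi0).const_mul 2
  refine ⟨h1, h1.trans ?_⟩
  rw [integral_sub hA hB, integral_add hj1 hj0, MeasureTheory.integral_const_mul,
    integral_add hi1 hi0]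
  ring
end
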